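/- Let Δ : A → A be an ℝ-linear σ̃-derivation. Then for every i ∈ X and every l ∈ X with l ≠ i and l ≠ σ(i), the l-th component of Δ(e_i) is zero, i.e. Δ(e_i)(l) = 0. -/

import Mathlib

/-- The indicator function of `{i}` in `Fin n → ℝ`. -/
def eFun {n : ℕ} (i : Fin n) : Fin n → ℝ := fun j => if j = i then 1 else 0

theorem stmt0 (n : ℕ) (hn : 1 ≤ n) (σ : Equiv.Perm (Fin n))
    (Δ : (Fin n → ℝ) →ₗ[ℝ] (Fin n → ℝ))
    (hΔ : ∀ f g : Fin n → ℝ, Δ (f * g) = (f ∘ ⇑σ.symm) * Δ g + Δ f * g)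
    (i l : Fin n) (hli : l ≠ i) (hlσ : l ≠ σ i) :
    Δ (eFun i) l = 0 := by
  have hidem : eFun i * eFun i = eFun i := by
    funext j; simp [eFun]
  have h := hΔ (eFun i) (eFun i)
  rw [hidem] at h
  have hl := congrFun h l
  have h1 : σ.symm l ≠ i := fun h => hlσ (by rw [← h]; simp)
  simp [eFun, hli, h1] at hl
  exact hl
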